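/- Almost surely, every sequence of maximizers of the empirical criterion converges to the true parameter: for P-almost every ω, if for each n the point θ_n ∈ Θ satisfies M_n(θ_n)(ω) = sup_{θ∈Θ} M_n(θ)(ω), then θ_n → θ₀. In particular, the least squares estimator θ̂_n converges to θ₀ almost surely. (Lemma 4.1(iii): strong consistency of the least squares estimator.) -/

import Mathlib

open MeasureTheory Filter Set

noncomputable section

/-- The least squares criterion `m_θ(x) = −(y − α·1{z ≤ ζ} − β·1{z > ζ})²`
for `θ = (α, β, ζ)` and `x = (y, z)`. -/
def mfn (θ : ℝ × ℝ × ℝ) (x : ℝ × ℝ) : ℝ :=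
  -(x.1 - (if x.2 ≤ θ.2.2 then θ.1 else θ.2.1)) ^ 2

/-- The residual function `ε̃_θ(y,z) = y − α·1{z ≤ ζ} − β·1{z > ζ}` for `θ = (α,β,ζ)`. -/
def epstil (θ : ℝ × ℝ × ℝ) (x : ℝ × ℝ) : ℝ :=
  x.1 - (if x.2 ≤ θ.2.2 then θ.1 else θ.2.1)

open Topology

/-- admissible (pointwise-convergence) points -/
def admPt (a b t : ℝ) : Prop := t = a ∨ t = b ∨ ∃ q : ℚ, (q : ℝ) = t

lemma polya_seq {a b : ℝ} (hab : a < b) {g : ℕ → ℝ → ℝ} {G : ℝ → ℝ}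
    (hmono : ∀ n, Monotone (g n))
    (hGmono : MonotoneOn G (Icc a b)) (hGcont : ContinuousOn G (Icc a b))
    (hpt : ∀ t ∈ Icc a b, admPt a b t →
      Tendsto (fun n => g n t) atTop (𝓝 (G t)))
    (ζ : ℕ → ℝ) (hζ : ∀ n, ζ n ∈ Icc a b) :
    Tendsto (fun n => g n (ζ n) - G (ζ n)) atTop (𝓝 0) := by
  rw [Metric.tendsto_atTop]
  intro ε hε
  have hε3 : 0 < ε / 3 := by linarith
  -- brackets with relatively open neighborhoods
  have key : ∀ x : Icc a b, ∃ p q : ℝ, ∃ U : Set ℝ,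
      p ∈ Icc a b ∧ q ∈ Icc a b ∧ p ≤ (x : ℝ) ∧ (x : ℝ) ≤ q ∧
      admPt a b p ∧ admPt a b q ∧ G q - G p ≤ ε / 3 ∧
      IsOpen U ∧ (x : ℝ) ∈ U ∧ (U ∩ Icc a b ⊆ Icc p q) := by
    rintro ⟨x, hx⟩
    have hcont := (hGcont x hx)
    rw [Metric.continuousWithinAt_iff] at hcont
    obtain ⟨δ, hδ, hδc⟩ := hcont (ε / 6) (by linarith)
    -- upper bracket
    have hq : ∃ q, q ∈ Icc a b ∧ x ≤ q ∧ admPt a b q ∧ G q - G x ≤ ε / 6 ∧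
        (x = b ∨ x < q) := by
      by_cases hxb : x = b
      · exact ⟨b, ⟨hab.le, le_rfl⟩, hxb ▸ le_rfl, Or.inr (Or.inl rfl), by
          rw [hxb]; simp; linarith, Or.inl hxb⟩
      · have hxb' : x < b := lt_of_le_of_ne hx.2 hxb
        obtain ⟨q, hq1, hq2⟩ := exists_rat_btwn (lt_min hxb' (by linarith : x < x + δ))
        refine ⟨q, ⟨le_trans hx.1 hq1.le, le_of_lt (lt_of_lt_of_le hq2 (min_le_left _ _))⟩,
          hq1.le, Or.inr (Or.inr ⟨q, rfl⟩), ?_, Or.inr hq1⟩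
        have hd : dist (q : ℝ) x < δ := by
          rw [Real.dist_eq, abs_lt]
          constructor
          · linarith [lt_of_lt_of_le hq2 (min_le_right _ _)]
          · linarith [lt_of_lt_of_le hq2 (min_le_right _ _)]
        have := hδc ⟨le_trans hx.1 hq1.le, le_of_lt (lt_of_lt_of_le hq2 (min_le_left _ _))⟩ hd
        rw [Real.dist_eq, abs_lt] at this
        linarith [this.1, this.2]
    -- lower bracket
    have hp : ∃ p, p ∈ Icc a b ∧ p ≤ x ∧ admPt a b p ∧ G x - G p ≤ ε / 6 ∧
        (x = a ∨ p < x) := by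
      by_cases hxa : x = a
      · exact ⟨a, ⟨le_rfl, hab.le⟩, hxa ▸ le_rfl, Or.inl rfl, by
          rw [hxa]; simp; linarith, Or.inl hxa⟩
      · have hxa' : a < x := lt_of_le_of_ne hx.1 (Ne.symm hxa)
        obtain ⟨p, hp1, hp2⟩ := exists_rat_btwn (max_lt hxa' (by linarith : x - δ < x))
        refine ⟨p, ⟨le_of_lt (lt_of_le_of_lt (le_max_left _ _) hp1), le_trans hp2.le hx.2⟩,
          hp2.le, Or.inr (Or.inr ⟨p, rfl⟩), ?_, Or.inr hp2⟩
        have hd : dist (p : ℝ) x < δ := by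
          rw [Real.dist_eq, abs_lt]
          constructor
          · linarith [lt_of_le_of_lt (le_max_right _ _) hp1]
          · linarith [lt_of_le_of_lt (le_max_right _ _) hp1]
        have := hδc ⟨le_of_lt (lt_of_le_of_lt (le_max_left _ _) hp1), le_trans hp2.le hx.2⟩ hd
        rw [Real.dist_eq, abs_lt] at this
        linarith [this.1, this.2]
    obtain ⟨q, hqIcc, hxq, hqAdm, hqG, hqs⟩ := hq
    obtain ⟨p, hpIcc, hpx, hpAdm, hpG, hps⟩ := hp
    refine ⟨p, q, Ioo (if x = a then x - 1 else p) (if x = b then x + 1 else q),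
      hpIcc, hqIcc, hpx, hxq, hpAdm, hqAdm, by linarith, isOpen_Ioo, ?_, ?_⟩
    · constructor
      · by_cases hxa : x = a
        · rw [if_pos hxa]; linarith
        · rw [if_neg hxa]; exact hps.resolve_left hxa
      · by_cases hxb : x = b
        · rw [if_pos hxb]; linarith
        · rw [if_neg hxb]; exact hqs.resolve_left hxb
    · rintro y ⟨⟨hy1, hy2⟩, hyIcc⟩
      constructor
      · by_cases hxa : x = a
        · rw [hxa] at hpx; exact le_trans (le_of_eq (le_antisymm hpx hpIcc.1)) hyIcc.1
        · rw [if_neg hxa] at hy1; exact hy1.le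
      · by_cases hxb : x = b
        · rw [hxb] at hxq; exact le_trans hyIcc.2 (le_of_eq (le_antisymm hqIcc.2 hxq).symm)
        · rw [if_neg hxb] at hy2; exact hy2.le
  choose p q U hpIcc hqIcc hpx hxq hpAdm hqAdm hgap hUopen hxU hUsub using key
  obtain ⟨t, ht⟩ := isCompact_Icc.elim_finite_subcover U hUopen
    (fun y hy => mem_iUnion.2 ⟨⟨y, hy⟩, hxU ⟨y, hy⟩⟩)
  have hEv : ∀ᶠ n in atTop, ∀ x ∈ t,
      |g n (p x) - G (p x)| < ε / 3 ∧ |g n (q x) - G (q x)| < ε / 3 := by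
    rw [Filter.eventually_all_finset]
    intro x _
    have h1 := (hpt (p x) (hpIcc x) (hpAdm x)).eventually
      (Metric.ball_mem_nhds (G (p x)) hε3)
    have h2 := (hpt (q x) (hqIcc x) (hqAdm x)).eventually
      (Metric.ball_mem_nhds (G (q x)) hε3)
    filter_upwards [h1, h2] with n hn1 hn2
    constructor
    · simpa [Real.dist_eq] using hn1
    · simpa [Real.dist_eq] using hn2
  obtain ⟨N, hN⟩ := eventually_atTop.1 hEv
  refine ⟨N, fun n hn => ?_⟩
  obtain ⟨x, hxt, hζU⟩ : ∃ x ∈ t, ζ n ∈ U x := by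
    have := ht (hζ n)
    simpa using this
  obtain ⟨hpζ, hζq⟩ := hUsub x ⟨hζU, hζ n⟩
  obtain ⟨h1, h2⟩ := hN n hn x hxt
  rw [abs_lt] at h1 h2
  have e1 : g n (ζ n) ≤ g n (q x) := hmono n hζq
  have e2 : g n (p x) ≤ g n (ζ n) := hmono n hpζ
  have e3 : G (p x) ≤ G (ζ n) := hGmono (hpIcc x) (hζ n) hpζ
  have e4 : G (ζ n) ≤ G (q x) := hGmono (hζ n) (hqIcc x) hζq
  rw [Real.dist_eq, sub_zero, abs_lt]
  constructor <;> [linarith [hgap x]; linarith [hgap x]]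

lemma slln_comp {Ω : Type} [MeasurableSpace Ω] (P : Measure Ω) [IsProbabilityMeasure P]
    (ℙd : Measure (ℝ × ℝ))
    (Xd : ℕ → Ω → ℝ × ℝ) (hXdMeas : ∀ i, Measurable (Xd i))
    (hXdLaw : ∀ i, Measure.map (Xd i) P = ℙd)
    (hXdIndep : ProbabilityTheory.iIndepFun Xd P)
    (h : ℝ × ℝ → ℝ) (hmeas : Measurable h) (hint : Integrable h ℙd) :
    ∀ᵐ ω ∂P, Tendsto (fun n : ℕ => (n : ℝ)⁻¹ * ∑ i ∈ Finset.range n, h (Xd i ω))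
      atTop (𝓝 (∫ x, h x ∂ℙd)) := by
  have hid : ∀ i, ProbabilityTheory.IdentDistrib (fun ω => h (Xd i ω)) (fun ω => h (Xd 0 ω)) P P := by
    intro i
    exact (ProbabilityTheory.IdentDistrib.comp
      ⟨(hXdMeas i).aemeasurable, (hXdMeas 0).aemeasurable, by rw [hXdLaw i, hXdLaw 0]⟩ hmeas)
  have hint0 : Integrable (fun ω => h (Xd 0 ω)) P := by
    rw [← hXdLaw 0] at hint
    exact (integrable_map_measure hmeas.aestronglyMeasurable (hXdMeas 0).aemeasurable).1 hint
  have hindep : Pairwise (Function.onFun (ProbabilityTheory.IndepFun · · P) (fun i ω => h (Xd i ω))) := by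
    intro i j hij
    exact (hXdIndep.indepFun hij).comp hmeas hmeas
  have := ProbabilityTheory.strong_law_ae_real (fun i ω => h (Xd i ω)) hint0 hindep hid
  have hmean : ∫ ω, h (Xd 0 ω) ∂P = ∫ x, h x ∂ℙd := by
    rw [← hXdLaw 0, integral_map (hXdMeas 0).aemeasurable hmeas.aestronglyMeasurable]
  filter_upwards [this] with ω hω
  rw [hmean] at hω
  have : (fun n : ℕ => (n : ℝ)⁻¹ * ∑ i ∈ Finset.range n, h (Xd i ω))
      = fun n : ℕ => (∑ i ∈ Finset.range n, h (Xd i ω)) / n := by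
    funext n; rw [div_eq_inv_mul]
  rw [this]
  exact hω

def empA (x : ℕ → ℝ × ℝ) (n : ℕ) (t : ℝ) : ℝ :=
  (n : ℝ)⁻¹ * ∑ i ∈ Finset.range n, (if (x i).2 ≤ t then (1:ℝ) else 0)

def empE (α₀ β₀ ζ₀ : ℝ) (x : ℕ → ℝ × ℝ) (n : ℕ) (t : ℝ) : ℝ :=
  (n : ℝ)⁻¹ * ∑ i ∈ Finset.range n, epstil (α₀, β₀, ζ₀) (x i) * (if (x i).2 ≤ t then (1:ℝ) else 0)

def empBp (α₀ β₀ ζ₀ : ℝ) (x : ℕ → ℝ × ℝ) (n : ℕ) (t : ℝ) : ℝ :=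
  (n : ℝ)⁻¹ * ∑ i ∈ Finset.range n, max (epstil (α₀, β₀, ζ₀) (x i)) 0 * (if (x i).2 ≤ t then (1:ℝ) else 0)

def empBm (α₀ β₀ ζ₀ : ℝ) (x : ℕ → ℝ × ℝ) (n : ℕ) (t : ℝ) : ℝ :=
  (n : ℝ)⁻¹ * ∑ i ∈ Finset.range n, max (-(epstil (α₀, β₀, ζ₀) (x i))) 0 * (if (x i).2 ≤ t then (1:ℝ) else 0)

def empT (α₀ β₀ ζ₀ : ℝ) (x : ℕ → ℝ × ℝ) (n : ℕ) : ℝ :=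
  (n : ℝ)⁻¹ * ∑ i ∈ Finset.range n, epstil (α₀, β₀, ζ₀) (x i)

lemma ind_mono {z t s : ℝ} (hts : t ≤ s) :
    (if z ≤ t then (1:ℝ) else 0) ≤ (if z ≤ s then (1:ℝ) else 0) := by
  by_cases h : z ≤ t
  · rw [if_pos h, if_pos (h.trans hts)]
  · rw [if_neg h]
    by_cases h2 : z ≤ s <;> simp [h2]

lemma ind_nonneg (z t : ℝ) : (0:ℝ) ≤ (if z ≤ t then (1:ℝ) else 0) := by
  by_cases h : z ≤ t <;> simp [h]

lemma ind_le_one (z t : ℝ) : (if z ≤ t then (1:ℝ) else 0) ≤ 1 := by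
  by_cases h : z ≤ t <;> simp [h]

lemma empA_mono (x : ℕ → ℝ × ℝ) (n : ℕ) : Monotone (empA x n) := by
  intro t s hts
  exact mul_le_mul_of_nonneg_left
    (Finset.sum_le_sum fun i _ => ind_mono hts) (by positivity)

lemma empA_nonneg (x : ℕ → ℝ × ℝ) (n : ℕ) (t : ℝ) : 0 ≤ empA x n t := by
  unfold empA
  exact mul_nonneg (by positivity) (Finset.sum_nonneg fun i _ => ind_nonneg _ _)

lemma empA_le_one (x : ℕ → ℝ × ℝ) (n : ℕ) (t : ℝ) : empA x n t ≤ 1 := by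
  unfold empA
  rcases Nat.eq_zero_or_pos n with h | h
  · simp [h]
  · have h1 : ∑ i ∈ Finset.range n, (if (x i).2 ≤ t then (1:ℝ) else 0) ≤ (n : ℝ) := by
      calc ∑ i ∈ Finset.range n, (if (x i).2 ≤ t then (1:ℝ) else 0)
          ≤ ∑ i ∈ Finset.range n, (1:ℝ) := Finset.sum_le_sum fun i _ => ind_le_one _ _
        _ = (n : ℝ) := by simp
    have hn : (0:ℝ) < (n:ℝ) := Nat.cast_pos.2 h
    calc (n:ℝ)⁻¹ * ∑ i ∈ Finset.range n, (if (x i).2 ≤ t then (1:ℝ) else 0)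
        ≤ (n:ℝ)⁻¹ * (n:ℝ) := mul_le_mul_of_nonneg_left h1 (by positivity)
      _ = 1 := inv_mul_cancel₀ hn.ne'

lemma empBp_mono (α₀ β₀ ζ₀ : ℝ) (x : ℕ → ℝ × ℝ) (n : ℕ) : Monotone (empBp α₀ β₀ ζ₀ x n) := by
  intro t s hts
  refine mul_le_mul_of_nonneg_left (Finset.sum_le_sum fun i _ => ?_) (by positivity)
  exact mul_le_mul_of_nonneg_left (ind_mono hts) (le_max_right _ _)

lemma empBm_mono (α₀ β₀ ζ₀ : ℝ) (x : ℕ → ℝ × ℝ) (n : ℕ) : Monotone (empBm α₀ β₀ ζ₀ x n) := by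
  intro t s hts
  refine mul_le_mul_of_nonneg_left (Finset.sum_le_sum fun i _ => ?_) (by positivity)
  exact mul_le_mul_of_nonneg_left (ind_mono hts) (le_max_right _ _)

lemma empE_eq (α₀ β₀ ζ₀ : ℝ) (x : ℕ → ℝ × ℝ) (n : ℕ) (t : ℝ) :
    empE α₀ β₀ ζ₀ x n t = empBp α₀ β₀ ζ₀ x n t - empBm α₀ β₀ ζ₀ x n t := by
  unfold empE empBp empBm
  rw [← mul_sub, ← Finset.sum_sub_distrib]
  congr 1
  refine Finset.sum_congr rfl fun i _ => ?_
  rw [← sub_mul]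
  congr 1
  rcases le_total (epstil (α₀, β₀, ζ₀) (x i)) 0 with h | h
  · rw [max_eq_right h, max_eq_left (by linarith)]; linarith
  · rw [max_eq_left h, max_eq_right (by linarith)]; linarith

lemma pointwise_id_le (α₀ β₀ α β ζ₀ ζ : ℝ) (hc : ζ₀ ≤ ζ) (x : ℝ × ℝ) :
    mfn (α₀, β₀, ζ₀) x - mfn (α, β, ζ) x =
      ((α₀-α)^2 - (β₀-α)^2) * (if x.2 ≤ ζ₀ then (1:ℝ) else 0)
      + ((β₀-α)^2 - (β₀-β)^2) * (if x.2 ≤ ζ then (1:ℝ) else 0)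
      + (β₀-β)^2
      + (2*((α₀-α) - (β₀-α))) * (epstil (α₀, β₀, ζ₀) x * (if x.2 ≤ ζ₀ then (1:ℝ) else 0))
      + (2*((β₀-α) - (β₀-β))) * (epstil (α₀, β₀, ζ₀) x * (if x.2 ≤ ζ then (1:ℝ) else 0))
      + (2*(β₀-β)) * epstil (α₀, β₀, ζ₀) x := by
  by_cases hz1 : x.2 ≤ ζ₀
  · have hz2 : x.2 ≤ ζ := hz1.trans hc
    simp only [mfn, epstil, if_pos hz1, if_pos hz2]
    ring
  · by_cases hz2 : x.2 ≤ ζ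
    · simp only [mfn, epstil, if_neg hz1, if_pos hz2]
      ring
    · simp only [mfn, epstil, if_neg hz1, if_neg hz2]
      ring

lemma pointwise_id_ge (α₀ β₀ α β ζ₀ ζ : ℝ) (hc : ζ ≤ ζ₀) (x : ℝ × ℝ) :
    mfn (α₀, β₀, ζ₀) x - mfn (α, β, ζ) x =
      ((α₀-α)^2 - (α₀-β)^2) * (if x.2 ≤ ζ then (1:ℝ) else 0)
      + ((α₀-β)^2 - (β₀-β)^2) * (if x.2 ≤ ζ₀ then (1:ℝ) else 0)
      + (β₀-β)^2
      + (2*((α₀-α) - (α₀-β))) * (epstil (α₀, β₀, ζ₀) x * (if x.2 ≤ ζ then (1:ℝ) else 0))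
      + (2*((α₀-β) - (β₀-β))) * (epstil (α₀, β₀, ζ₀) x * (if x.2 ≤ ζ₀ then (1:ℝ) else 0))
      + (2*(β₀-β)) * epstil (α₀, β₀, ζ₀) x := by
  by_cases hz1 : x.2 ≤ ζ
  · have hz2 : x.2 ≤ ζ₀ := hz1.trans hc
    simp only [mfn, epstil, if_pos hz1, if_pos hz2]
    ring
  · by_cases hz2 : x.2 ≤ ζ₀
    · simp only [mfn, epstil, if_neg hz1, if_pos hz2]
      ring
    · simp only [mfn, epstil, if_neg hz1, if_neg hz2]
      ring

lemma abs_sub_le' (p q : ℝ) : |p - q| ≤ |p| + |q| := by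
  simpa [sub_eq_add_neg, abs_neg] using abs_add_le p (-q)

lemma master (α₀ β₀ α β ζ₀ ζ : ℝ) (x : ℕ → ℝ × ℝ) (n : ℕ) (hn : 1 ≤ n)
    (h0 : (n:ℝ)⁻¹ * ∑ i ∈ Finset.range n, mfn (α₀, β₀, ζ₀) (x i)
        ≤ (n:ℝ)⁻¹ * ∑ i ∈ Finset.range n, mfn (α, β, ζ) (x i)) :
    (α₀-α)^2 * empA x n (min ζ ζ₀)
    + (if ζ₀ ≤ ζ then β₀-α else α₀-β)^2 * (empA x n (max ζ ζ₀) - empA x n (min ζ ζ₀))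
    + (β₀-β)^2 * (1 - empA x n (max ζ ζ₀))
    ≤ 2 * (|α₀-α| * |empE α₀ β₀ ζ₀ x n (min ζ ζ₀)|
      + |if ζ₀ ≤ ζ then β₀-α else α₀-β| * (|empE α₀ β₀ ζ₀ x n (min ζ ζ₀)| + |empE α₀ β₀ ζ₀ x n (max ζ ζ₀)|)
      + |β₀-β| * (|empT α₀ β₀ ζ₀ x n| + |empE α₀ β₀ ζ₀ x n (max ζ ζ₀)|)) := by
  have hnR : (0:ℝ) < (n:ℝ) := by exact_mod_cast hn
  have hinv : (n:ℝ)⁻¹ * (n:ℝ) = 1 := inv_mul_cancel₀ hnR.ne'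
  rcases le_or_gt ζ₀ ζ with hc | hc
  · rw [min_eq_right hc, max_eq_left hc, if_pos hc]
    have hsum : ∑ i ∈ Finset.range n, mfn (α₀, β₀, ζ₀) (x i)
        - ∑ i ∈ Finset.range n, mfn (α, β, ζ) (x i)
        = ((α₀-α)^2 - (β₀-α)^2) * (∑ i ∈ Finset.range n, (if (x i).2 ≤ ζ₀ then (1:ℝ) else 0))
        + ((β₀-α)^2 - (β₀-β)^2) * (∑ i ∈ Finset.range n, (if (x i).2 ≤ ζ then (1:ℝ) else 0))
        + (β₀-β)^2 * (n:ℝ)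
        + (2*((α₀-α) - (β₀-α))) * (∑ i ∈ Finset.range n, epstil (α₀, β₀, ζ₀) (x i) * (if (x i).2 ≤ ζ₀ then (1:ℝ) else 0))
        + (2*((β₀-α) - (β₀-β))) * (∑ i ∈ Finset.range n, epstil (α₀, β₀, ζ₀) (x i) * (if (x i).2 ≤ ζ then (1:ℝ) else 0))
        + (2*(β₀-β)) * (∑ i ∈ Finset.range n, epstil (α₀, β₀, ζ₀) (x i)) := by
      rw [← Finset.sum_sub_distrib,
        Finset.sum_congr rfl (fun i _ => pointwise_id_le α₀ β₀ α β ζ₀ ζ hc (x i))]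
      simp only [Finset.sum_add_distrib, ← Finset.mul_sum, Finset.sum_const,
        Finset.card_range, nsmul_eq_mul]
      ring
    have key0 : (α₀-α)^2 * empA x n ζ₀ + (β₀-α)^2 * (empA x n ζ - empA x n ζ₀)
        + (β₀-β)^2 * (1 - empA x n ζ)
        + 2*((α₀-α) * empE α₀ β₀ ζ₀ x n ζ₀
          + (β₀-α) * (empE α₀ β₀ ζ₀ x n ζ - empE α₀ β₀ ζ₀ x n ζ₀)
          + (β₀-β) * (empT α₀ β₀ ζ₀ x n - empE α₀ β₀ ζ₀ x n ζ))
        = (n:ℝ)⁻¹ * (∑ i ∈ Finset.range n, mfn (α₀, β₀, ζ₀) (x i)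
            - ∑ i ∈ Finset.range n, mfn (α, β, ζ) (x i)) := by
      rw [hsum]; unfold empA empE empT
      linear_combination (-((β₀-β)^2)) * hinv
    have key1 : (α₀-α)^2 * empA x n ζ₀ + (β₀-α)^2 * (empA x n ζ - empA x n ζ₀)
        + (β₀-β)^2 * (1 - empA x n ζ)
        + 2*((α₀-α) * empE α₀ β₀ ζ₀ x n ζ₀
          + (β₀-α) * (empE α₀ β₀ ζ₀ x n ζ - empE α₀ β₀ ζ₀ x n ζ₀)
          + (β₀-β) * (empT α₀ β₀ ζ₀ x n - empE α₀ β₀ ζ₀ x n ζ)) ≤ 0 := by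
      rw [key0, mul_sub]; linarith
    have t1 : -((α₀-α) * empE α₀ β₀ ζ₀ x n ζ₀) ≤ |α₀-α| * |empE α₀ β₀ ζ₀ x n ζ₀| := by
      rw [← abs_mul]; exact neg_le_abs _
    have t2 : -((β₀-α) * (empE α₀ β₀ ζ₀ x n ζ - empE α₀ β₀ ζ₀ x n ζ₀))
        ≤ |β₀-α| * (|empE α₀ β₀ ζ₀ x n ζ₀| + |empE α₀ β₀ ζ₀ x n ζ|) := by
      calc -((β₀-α) * (empE α₀ β₀ ζ₀ x n ζ - empE α₀ β₀ ζ₀ x n ζ₀))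
          ≤ |(β₀-α) * (empE α₀ β₀ ζ₀ x n ζ - empE α₀ β₀ ζ₀ x n ζ₀)| := neg_le_abs _
        _ = |β₀-α| * |empE α₀ β₀ ζ₀ x n ζ - empE α₀ β₀ ζ₀ x n ζ₀| := abs_mul _ _
        _ ≤ |β₀-α| * (|empE α₀ β₀ ζ₀ x n ζ| + |empE α₀ β₀ ζ₀ x n ζ₀|) :=
            mul_le_mul_of_nonneg_left (abs_sub_le' _ _) (abs_nonneg _)
        _ = |β₀-α| * (|empE α₀ β₀ ζ₀ x n ζ₀| + |empE α₀ β₀ ζ₀ x n ζ|) := by rw [add_comm]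
    have t3 : -((β₀-β) * (empT α₀ β₀ ζ₀ x n - empE α₀ β₀ ζ₀ x n ζ))
        ≤ |β₀-β| * (|empT α₀ β₀ ζ₀ x n| + |empE α₀ β₀ ζ₀ x n ζ|) := by
      calc -((β₀-β) * (empT α₀ β₀ ζ₀ x n - empE α₀ β₀ ζ₀ x n ζ))
          ≤ |(β₀-β) * (empT α₀ β₀ ζ₀ x n - empE α₀ β₀ ζ₀ x n ζ)| := neg_le_abs _
        _ = |β₀-β| * |empT α₀ β₀ ζ₀ x n - empE α₀ β₀ ζ₀ x n ζ| := abs_mul _ _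
        _ ≤ |β₀-β| * (|empT α₀ β₀ ζ₀ x n| + |empE α₀ β₀ ζ₀ x n ζ|) :=
            mul_le_mul_of_nonneg_left (abs_sub_le' _ _) (abs_nonneg _)
    linarith
  · rw [min_eq_left hc.le, max_eq_right hc.le, if_neg (not_le.2 hc)]
    have hsum : ∑ i ∈ Finset.range n, mfn (α₀, β₀, ζ₀) (x i)
        - ∑ i ∈ Finset.range n, mfn (α, β, ζ) (x i)
        = ((α₀-α)^2 - (α₀-β)^2) * (∑ i ∈ Finset.range n, (if (x i).2 ≤ ζ then (1:ℝ) else 0))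
        + ((α₀-β)^2 - (β₀-β)^2) * (∑ i ∈ Finset.range n, (if (x i).2 ≤ ζ₀ then (1:ℝ) else 0))
        + (β₀-β)^2 * (n:ℝ)
        + (2*((α₀-α) - (α₀-β))) * (∑ i ∈ Finset.range n, epstil (α₀, β₀, ζ₀) (x i) * (if (x i).2 ≤ ζ then (1:ℝ) else 0))
        + (2*((α₀-β) - (β₀-β))) * (∑ i ∈ Finset.range n, epstil (α₀, β₀, ζ₀) (x i) * (if (x i).2 ≤ ζ₀ then (1:ℝ) else 0))
        + (2*(β₀-β)) * (∑ i ∈ Finset.range n, epstil (α₀, β₀, ζ₀) (x i)) := by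
      rw [← Finset.sum_sub_distrib,
        Finset.sum_congr rfl (fun i _ => pointwise_id_ge α₀ β₀ α β ζ₀ ζ hc.le (x i))]
      simp only [Finset.sum_add_distrib, ← Finset.mul_sum, Finset.sum_const,
        Finset.card_range, nsmul_eq_mul]
      ring
    have key0 : (α₀-α)^2 * empA x n ζ + (α₀-β)^2 * (empA x n ζ₀ - empA x n ζ)
        + (β₀-β)^2 * (1 - empA x n ζ₀)
        + 2*((α₀-α) * empE α₀ β₀ ζ₀ x n ζ
          + (α₀-β) * (empE α₀ β₀ ζ₀ x n ζ₀ - empE α₀ β₀ ζ₀ x n ζ)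
          + (β₀-β) * (empT α₀ β₀ ζ₀ x n - empE α₀ β₀ ζ₀ x n ζ₀))
        = (n:ℝ)⁻¹ * (∑ i ∈ Finset.range n, mfn (α₀, β₀, ζ₀) (x i)
            - ∑ i ∈ Finset.range n, mfn (α, β, ζ) (x i)) := by
      rw [hsum]; unfold empA empE empT
      linear_combination (-((β₀-β)^2)) * hinv
    have key1 : (α₀-α)^2 * empA x n ζ + (α₀-β)^2 * (empA x n ζ₀ - empA x n ζ)
        + (β₀-β)^2 * (1 - empA x n ζ₀)
        + 2*((α₀-α) * empE α₀ β₀ ζ₀ x n ζ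
          + (α₀-β) * (empE α₀ β₀ ζ₀ x n ζ₀ - empE α₀ β₀ ζ₀ x n ζ)
          + (β₀-β) * (empT α₀ β₀ ζ₀ x n - empE α₀ β₀ ζ₀ x n ζ₀)) ≤ 0 := by
      rw [key0, mul_sub]; linarith
    have t1 : -((α₀-α) * empE α₀ β₀ ζ₀ x n ζ) ≤ |α₀-α| * |empE α₀ β₀ ζ₀ x n ζ| := by
      rw [← abs_mul]; exact neg_le_abs _
    have t2 : -((α₀-β) * (empE α₀ β₀ ζ₀ x n ζ₀ - empE α₀ β₀ ζ₀ x n ζ))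
        ≤ |α₀-β| * (|empE α₀ β₀ ζ₀ x n ζ| + |empE α₀ β₀ ζ₀ x n ζ₀|) := by
      calc -((α₀-β) * (empE α₀ β₀ ζ₀ x n ζ₀ - empE α₀ β₀ ζ₀ x n ζ))
          ≤ |(α₀-β) * (empE α₀ β₀ ζ₀ x n ζ₀ - empE α₀ β₀ ζ₀ x n ζ)| := neg_le_abs _
        _ = |α₀-β| * |empE α₀ β₀ ζ₀ x n ζ₀ - empE α₀ β₀ ζ₀ x n ζ| := abs_mul _ _
        _ ≤ |α₀-β| * (|empE α₀ β₀ ζ₀ x n ζ₀| + |empE α₀ β₀ ζ₀ x n ζ|) :=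
            mul_le_mul_of_nonneg_left (abs_sub_le' _ _) (abs_nonneg _)
        _ = |α₀-β| * (|empE α₀ β₀ ζ₀ x n ζ| + |empE α₀ β₀ ζ₀ x n ζ₀|) := by rw [add_comm]
    have t3 : -((β₀-β) * (empT α₀ β₀ ζ₀ x n - empE α₀ β₀ ζ₀ x n ζ₀))
        ≤ |β₀-β| * (|empT α₀ β₀ ζ₀ x n| + |empE α₀ β₀ ζ₀ x n ζ₀|) := by
      calc -((β₀-β) * (empT α₀ β₀ ζ₀ x n - empE α₀ β₀ ζ₀ x n ζ₀))
          ≤ |(β₀-β) * (empT α₀ β₀ ζ₀ x n - empE α₀ β₀ ζ₀ x n ζ₀)| := neg_le_abs _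
        _ = |β₀-β| * |empT α₀ β₀ ζ₀ x n - empE α₀ β₀ ζ₀ x n ζ₀| := abs_mul _ _
        _ ≤ |β₀-β| * (|empT α₀ β₀ ζ₀ x n| + |empE α₀ β₀ ζ₀ x n ζ₀|) :=
            mul_le_mul_of_nonneg_left (abs_sub_le' _ _) (abs_nonneg _)
    linarith

set_option maxHeartbeats 1000000 in
lemma key_det (α₀ β₀ a b ζ₀ : ℝ) (hab : a < b) (hζ₀ : ζ₀ ∈ Icc a b) (hαβ : α₀ ≠ β₀)
    (F : ℝ → ℝ) (hFmono : Monotone F) (hFcont : ContinuousOn F (Icc a b))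
    (κ η₀ : ℝ) (hκ : 0 < κ) (hη : 0 < η₀)
    (hFkey : ∀ ζ ∈ Icc a b, κ * min |ζ - ζ₀| η₀ ≤ F (max ζ ζ₀) - F (min ζ ζ₀))
    (qa qb : ℝ) (hqa : 0 < qa) (hqb : 0 < qb) (hFa : qa ≤ F a) (hFb : F b ≤ 1 - qb)
    (c : ℝ) (hc : 0 ≤ c) (x : ℕ → ℝ × ℝ)
    (hA : ∀ t ∈ Icc a b, admPt a b t → Tendsto (fun n => empA x n t) atTop (𝓝 (F t)))
    (hBp : ∀ t ∈ Icc a b, admPt a b t →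
      Tendsto (fun n => empBp α₀ β₀ ζ₀ x n t) atTop (𝓝 (c * F t)))
    (hBm : ∀ t ∈ Icc a b, admPt a b t →
      Tendsto (fun n => empBm α₀ β₀ ζ₀ x n t) atTop (𝓝 (c * F t)))
    (hT : Tendsto (fun n => empT α₀ β₀ ζ₀ x n) atTop (𝓝 0))
    (θs : ℕ → ℝ × ℝ × ℝ)
    (hθs : ∀ n, (θs n).2.2 ∈ Icc a b ∧ ∀ θ : ℝ × ℝ × ℝ, θ.2.2 ∈ Icc a b →
      (n:ℝ)⁻¹ * ∑ i ∈ Finset.range n, mfn θ (x i)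
        ≤ (n:ℝ)⁻¹ * ∑ i ∈ Finset.range n, mfn (θs n) (x i)) :
    Tendsto θs atTop (𝓝 (α₀, β₀, ζ₀)) := by
  -- uniform (sequential) versions of the pointwise limits
  have U1 : ∀ ζq : ℕ → ℝ, (∀ n, ζq n ∈ Icc a b) →
      Tendsto (fun n => empA x n (ζq n) - F (ζq n)) atTop (𝓝 0) :=
    fun ζq hq => polya_seq hab (empA_mono x) (hFmono.monotoneOn _) hFcont hA ζq hq
  have UBp : ∀ ζq : ℕ → ℝ, (∀ n, ζq n ∈ Icc a b) →
      Tendsto (fun n => empBp α₀ β₀ ζ₀ x n (ζq n) - c * F (ζq n)) atTop (𝓝 0) :=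
    fun ζq hq => polya_seq hab (empBp_mono α₀ β₀ ζ₀ x)
      (fun s _ t _ hst => mul_le_mul_of_nonneg_left (hFmono hst) hc)
      (continuousOn_const.mul hFcont) hBp ζq hq
  have UBm : ∀ ζq : ℕ → ℝ, (∀ n, ζq n ∈ Icc a b) →
      Tendsto (fun n => empBm α₀ β₀ ζ₀ x n (ζq n) - c * F (ζq n)) atTop (𝓝 0) :=
    fun ζq hq => polya_seq hab (empBm_mono α₀ β₀ ζ₀ x)
      (fun s _ t _ hst => mul_le_mul_of_nonneg_left (hFmono hst) hc)
      (continuousOn_const.mul hFcont) hBm ζq hq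
  have U2 : ∀ ζq : ℕ → ℝ, (∀ n, ζq n ∈ Icc a b) →
      Tendsto (fun n => empE α₀ β₀ ζ₀ x n (ζq n)) atTop (𝓝 0) := by
    intro ζq hq
    have h12 := (UBp ζq hq).sub (UBm ζq hq)
    have heq : (fun n => (empBp α₀ β₀ ζ₀ x n (ζq n) - c * F (ζq n))
        - (empBm α₀ β₀ ζ₀ x n (ζq n) - c * F (ζq n)))
        = fun n => empE α₀ β₀ ζ₀ x n (ζq n) := by
      funext n; rw [empE_eq]; ring
    rw [heq] at h12
    simpa using h12
  -- notations
  set ζs : ℕ → ℝ := fun n => (θs n).2.2 with hζs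
  set αs : ℕ → ℝ := fun n => (θs n).1 with hαs
  set βs : ℕ → ℝ := fun n => (θs n).2.1 with hβs
  have hζsI : ∀ n, ζs n ∈ Icc a b := fun n => (hθs n).1
  set ζ1 : ℕ → ℝ := fun n => min (ζs n) ζ₀ with hζ1
  set ζ2 : ℕ → ℝ := fun n => max (ζs n) ζ₀ with hζ2
  have hζ1I : ∀ n, ζ1 n ∈ Icc a b :=
    fun n => ⟨le_min (hζsI n).1 hζ₀.1, min_le_of_left_le (hζsI n).2⟩
  have hζ2I : ∀ n, ζ2 n ∈ Icc a b :=
    fun n => ⟨le_max_of_le_left (hζsI n).1, max_le (hζsI n).2 hζ₀.2⟩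
  set u : ℕ → ℝ := fun n => α₀ - αs n with hu
  set w : ℕ → ℝ := fun n => β₀ - βs n with hw
  set v : ℕ → ℝ := fun n => if ζ₀ ≤ ζs n then β₀ - αs n else α₀ - βs n with hv
  set Δ : ℕ → ℝ := fun n => |empE α₀ β₀ ζ₀ x n (ζ1 n)| + |empE α₀ β₀ ζ₀ x n (ζ2 n)|
    + |empT α₀ β₀ ζ₀ x n| with hΔ
  have hΔnn : ∀ n, 0 ≤ Δ n := fun n => by positivity
  have hΔ0 : Tendsto Δ atTop (𝓝 0) := by
    have h1 : Tendsto (fun n => |empE α₀ β₀ ζ₀ x n (ζ1 n)|) atTop (𝓝 0) := by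
      simpa using (U2 ζ1 hζ1I).abs
    have h2 : Tendsto (fun n => |empE α₀ β₀ ζ₀ x n (ζ2 n)|) atTop (𝓝 0) := by
      simpa using (U2 ζ2 hζ2I).abs
    have h3 : Tendsto (fun n => |empT α₀ β₀ ζ₀ x n|) atTop (𝓝 0) := by
      simpa using hT.abs
    simpa using (h1.add h2).add h3
  -- lower bounds on the empirical CDF at the endpoints
  have hAa := hA a ⟨le_rfl, hab.le⟩ (Or.inl rfl)
  have hAb := hA b ⟨hab.le, le_rfl⟩ (Or.inr (Or.inl rfl))
  have hEva : ∀ᶠ n in atTop, qa / 2 ≤ empA x n (ζ1 n) := by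
    filter_upwards [hAa.eventually (eventually_gt_nhds (by linarith : qa/2 < F a))] with n hn
    exact le_trans hn.le (empA_mono x n (hζ1I n).1)
  have hEvb : ∀ᶠ n in atTop, qb / 2 ≤ 1 - empA x n (ζ2 n) := by
    filter_upwards [hAb.eventually (eventually_lt_nhds (by linarith : F b < 1 - qb/2))] with n hn
    have := empA_mono x n (hζ2I n).2
    linarith
  set r : ℝ := min (qa/2) (qb/2) with hrdef
  have hr : 0 < r := lt_min (by linarith) (by linarith)
  set c0 : ℝ := |α₀ - β₀| with hc0def
  have hc0 : 0 < c0 := abs_pos.2 (sub_ne_zero.2 hαβ)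
  -- the master inequality: eventual bounds
  have EV : ∀ᶠ n in atTop,
      (u n)^2 * r ≤ 2*(|u n| + |v n| + |w n|) * Δ n ∧
      (w n)^2 * r ≤ 2*(|u n| + |v n| + |w n|) * Δ n ∧
      (v n)^2 * (empA x n (ζ2 n) - empA x n (ζ1 n)) ≤ 2*(|u n| + |v n| + |w n|) * Δ n := by
    filter_upwards [hEva, hEvb, eventually_ge_atTop 1] with n h1 h2 hn
    have M := master α₀ β₀ (αs n) (βs n) ζ₀ (ζs n) x n hn
      ((hθs n).2 (α₀, β₀, ζ₀) hζ₀)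
    have hd1 : |empE α₀ β₀ ζ₀ x n (ζ1 n)| ≤ Δ n := by
      simp only [hΔ]; have := abs_nonneg (empE α₀ β₀ ζ₀ x n (ζ2 n))
      have := abs_nonneg (empT α₀ β₀ ζ₀ x n); linarith
    have hd2 : |empE α₀ β₀ ζ₀ x n (ζ1 n)| + |empE α₀ β₀ ζ₀ x n (ζ2 n)| ≤ Δ n := by
      simp only [hΔ]; have := abs_nonneg (empT α₀ β₀ ζ₀ x n); linarith
    have hd3 : |empT α₀ β₀ ζ₀ x n| + |empE α₀ β₀ ζ₀ x n (ζ2 n)| ≤ Δ n := by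
      simp only [hΔ]; have := abs_nonneg (empE α₀ β₀ ζ₀ x n (ζ1 n)); linarith
    have hexp : 2*(|u n| + |v n| + |w n|) * Δ n
        = 2*(|u n| * Δ n) + 2*(|v n| * Δ n) + 2*(|w n| * Δ n) := by ring
    have e1 := mul_le_mul_of_nonneg_left hd1 (abs_nonneg (u n))
    have e2 := mul_le_mul_of_nonneg_left hd2 (abs_nonneg (v n))
    have e3 := mul_le_mul_of_nonneg_left hd3 (abs_nonneg (w n))
    have M' : (u n)^2 * empA x n (ζ1 n) + (v n)^2 * (empA x n (ζ2 n) - empA x n (ζ1 n))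
        + (w n)^2 * (1 - empA x n (ζ2 n))
        ≤ 2 * (|u n| * |empE α₀ β₀ ζ₀ x n (ζ1 n)|
        + |v n| * (|empE α₀ β₀ ζ₀ x n (ζ1 n)| + |empE α₀ β₀ ζ₀ x n (ζ2 n)|)
        + |w n| * (|empT α₀ β₀ ζ₀ x n| + |empE α₀ β₀ ζ₀ x n (ζ2 n)|)) := M
    have chain : (u n)^2 * empA x n (ζ1 n) + (v n)^2 * (empA x n (ζ2 n) - empA x n (ζ1 n))
        + (w n)^2 * (1 - empA x n (ζ2 n)) ≤ 2*(|u n| + |v n| + |w n|) * Δ n := by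
      rw [hexp]; linarith
    have hq1 : 0 ≤ (v n)^2 * (empA x n (ζ2 n) - empA x n (ζ1 n)) :=
      mul_nonneg (sq_nonneg _) (sub_nonneg.2 (empA_mono x n (min_le_max)))
    have hq2 : 0 ≤ (w n)^2 * (1 - empA x n (ζ2 n)) :=
      mul_nonneg (sq_nonneg _) (sub_nonneg.2 (empA_le_one x n _))
    have hq3 : 0 ≤ (u n)^2 * empA x n (ζ1 n) :=
      mul_nonneg (sq_nonneg _) (empA_nonneg x n _)
    have hra : (u n)^2 * r ≤ (u n)^2 * empA x n (ζ1 n) :=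
      mul_le_mul_of_nonneg_left (le_trans (min_le_left _ _) h1) (sq_nonneg _)
    have hrb : (w n)^2 * r ≤ (w n)^2 * (1 - empA x n (ζ2 n)) :=
      mul_le_mul_of_nonneg_left (le_trans (min_le_right _ _) h2) (sq_nonneg _)
    exact ⟨by linarith, by linarith, by linarith⟩
  -- bounds relating |v| to |u|,|w|
  have hv_le : ∀ n, |v n| ≤ |u n| + |w n| + c0 := by
    intro n
    by_cases h : ζ₀ ≤ ζs n
    · have hveq : v n = u n - (α₀ - β₀) := by simp only [hv, hu, if_pos h]; ring
      rw [hveq, hc0def]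
      have := abs_sub_le' (u n) (α₀ - β₀)
      have := abs_nonneg (w n)
      linarith
    · have hveq : v n = w n + (α₀ - β₀) := by simp only [hv, hw, if_neg h]; ring
      rw [hveq, hc0def]
      have := abs_add_le (w n) (α₀ - β₀)
      have := abs_nonneg (u n)
      linarith
  have hv_ge : ∀ n, c0 ≤ |u n| + |v n| + |w n| := by
    intro n
    by_cases h : ζ₀ ≤ ζs n
    · have hveq : α₀ - β₀ = u n - v n := by simp only [hv, hu, if_pos h]; ring
      rw [hc0def, hveq]
      have := abs_sub_le' (u n) (v n)
      have := abs_nonneg (w n)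
      linarith
    · have hveq : α₀ - β₀ = v n - w n := by simp only [hv, hw, if_neg h]; ring
      rw [hc0def, hveq]
      have := abs_sub_le' (v n) (w n)
      have := abs_nonneg (u n)
      linarith
  set s : ℕ → ℝ := fun n => max |u n| |w n| with hs
  have hsnn : ∀ n, 0 ≤ s n := fun n => le_trans (abs_nonneg _) (le_max_left _ _)
  have hRb : ∀ n, 2*(|u n| + |v n| + |w n|) * Δ n ≤ (8 * s n + 2*c0) * Δ n := by
    intro n
    apply mul_le_mul_of_nonneg_right ?_ (hΔnn n)
    have h1 : |u n| ≤ s n := le_max_left _ _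
    have h2 : |w n| ≤ s n := le_max_right _ _
    have h3 := hv_le n
    linarith
  have hsEV : ∀ᶠ n in atTop, (s n)^2 * r ≤ (8 * s n + 2*c0) * Δ n := by
    filter_upwards [EV] with n hEVn
    obtain ⟨h1, h2, _⟩ := hEVn
    rcases max_cases |u n| |w n| with ⟨hse, _⟩ | ⟨hse, _⟩
    · have : (s n)^2 = (u n)^2 := by rw [hs]; simp only; rw [hse, sq_abs]
      rw [this]
      exact le_trans h1 (hRb n)
    · have : (s n)^2 = (w n)^2 := by rw [hs]; simp only; rw [hse, sq_abs]
      rw [this]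
      exact le_trans h2 (hRb n)
  have hsT : Tendsto s atTop (𝓝 0) := by
    rw [Metric.tendsto_atTop]
    intro ε hε
    have hd1 : (0:ℝ) < ε * r / 16 := by positivity
    have hd2 : (0:ℝ) < ε^2 * r / (4 * c0) := by positivity
    have hev : ∀ᶠ n in atTop, Δ n < min (ε*r/16) (ε^2*r/(4*c0)) :=
      hΔ0.eventually (eventually_lt_nhds (lt_min hd1 hd2))
    obtain ⟨N, hN⟩ := eventually_atTop.1 (hsEV.and hev)
    refine ⟨N, fun n hn => ?_⟩
    obtain ⟨hm, hδ⟩ := hN n hn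
    rw [Real.dist_eq, sub_zero, abs_of_nonneg (hsnn n)]
    by_contra hcon
    push_neg at hcon
    have hδ1 : Δ n < ε*r/16 := lt_of_lt_of_le hδ (min_le_left _ _)
    have hδ2 : Δ n < ε^2*r/(4*c0) := lt_of_lt_of_le hδ (min_le_right _ _)
    have hsp : 0 < s n := lt_of_lt_of_le hε hcon
    have k1 : s n * Δ n < s n * (ε*r/16) := mul_lt_mul_of_pos_left hδ1 hsp
    have k2 : s n * (ε*r/16) ≤ s n * (s n * r/16) := by
      apply mul_le_mul_of_nonneg_left ?_ hsp.le
      have := mul_le_mul_of_nonneg_right hcon hr.le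
      linarith
    have k3 : 4*c0*Δ n < ε^2*r := by
      have := mul_lt_mul_of_pos_left hδ2 (by positivity : (0:ℝ) < 4*c0)
      have heq : 4*c0*(ε^2*r/(4*c0)) = ε^2*r := by field_simp
      linarith [heq ▸ this]
    have k4 : ε * ε ≤ s n * s n := mul_self_le_mul_self hε.le hcon
    have e1 : (8*s n + 2*c0)*Δ n = 8*(s n*Δ n) + 2*(c0*Δ n) := by ring
    have e2 : (8:ℝ)*(s n*(s n*r/16)) = (s n)^2*r/2 := by ring
    have e3 : 4*c0*Δ n = 4*(c0*Δ n) := by ring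
    have e4 : ε*ε*r ≤ s n*s n*r := mul_le_mul_of_nonneg_right k4 hr.le
    have e5 : ε*ε*r = ε^2*r := by ring
    have e6 : s n*s n*r = (s n)^2*r := by ring
    clear_value s Δ r c0
    linarith [hm, k1, k2, k3, e1, e2, e3, e4, e5, e6]
  have habsU : Tendsto (fun n => |u n|) atTop (𝓝 0) :=
    squeeze_zero (fun n => abs_nonneg _) (fun n => le_max_left _ _) hsT
  have habsW : Tendsto (fun n => |w n|) atTop (𝓝 0) :=
    squeeze_zero (fun n => abs_nonneg _) (fun n => le_max_right _ _) hsT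
  have huT : Tendsto u atTop (𝓝 0) := by
    have hneg : Tendsto (fun n => -|u n|) atTop (𝓝 0) := by simpa using habsU.neg
    exact tendsto_of_tendsto_of_tendsto_of_le_of_le hneg habsU
      (fun n => neg_abs_le _) (fun n => le_abs_self _)
  have hwT : Tendsto w atTop (𝓝 0) := by
    have hneg : Tendsto (fun n => -|w n|) atTop (𝓝 0) := by simpa using habsW.neg
    exact tendsto_of_tendsto_of_tendsto_of_le_of_le hneg habsW
      (fun n => neg_abs_le _) (fun n => le_abs_self _)
  have hαT : Tendsto αs atTop (𝓝 α₀) := by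
    have h := (tendsto_const_nhds : Tendsto (fun _ : ℕ => α₀) atTop (𝓝 α₀)).sub huT
    rw [sub_zero] at h
    have heq : (fun n => α₀ - u n) = αs := by funext n; rw [hu]; ring
    rwa [heq] at h
  have hβT : Tendsto βs atTop (𝓝 β₀) := by
    have h := (tendsto_const_nhds : Tendsto (fun _ : ℕ => β₀) atTop (𝓝 β₀)).sub hwT
    rw [sub_zero] at h
    have heq : (fun n => β₀ - w n) = βs := by funext n; rw [hw]; ring
    rwa [heq] at h
  -- convergence of the change point
  have hvEV : ∀ᶠ n in atTop, c0/2 ≤ |v n| := by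
    have hev : ∀ᶠ n in atTop, s n < c0/4 :=
      hsT.eventually (eventually_lt_nhds (by positivity : (0:ℝ) < c0/4))
    filter_upwards [hev] with n hn
    have h1 : |u n| ≤ s n := le_max_left _ _
    have h2 : |w n| ≤ s n := le_max_right _ _
    have h3 := hv_ge n
    linarith
  have hPbnd : ∀ᶠ n in atTop, empA x n (ζ2 n) - empA x n (ζ1 n)
      ≤ ((c0/2)^2)⁻¹ * ((8*s n + 2*c0)*Δ n) := by
    filter_upwards [EV, hvEV] with n hEVn hv2
    obtain ⟨_, _, h3⟩ := hEVn
    have hch : (v n)^2 * (empA x n (ζ2 n) - empA x n (ζ1 n)) ≤ (8*s n + 2*c0)*Δ n :=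
      le_trans h3 (hRb n)
    have hv2sq : (c0/2)^2 ≤ (v n)^2 := by
      have := sq_abs (v n)
      nlinarith [hv2, hc0, abs_nonneg (v n)]
    have hAnn : 0 ≤ empA x n (ζ2 n) - empA x n (ζ1 n) :=
      sub_nonneg.2 (empA_mono x n min_le_max)
    have hstep : (c0/2)^2 * (empA x n (ζ2 n) - empA x n (ζ1 n)) ≤ (8*s n + 2*c0)*Δ n :=
      le_trans (mul_le_mul_of_nonneg_right hv2sq hAnn) hch
    calc empA x n (ζ2 n) - empA x n (ζ1 n)
        = ((c0/2)^2)⁻¹ * ((c0/2)^2 * (empA x n (ζ2 n) - empA x n (ζ1 n))) :=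
          (inv_mul_cancel_left₀ (by positivity) _).symm
      _ ≤ ((c0/2)^2)⁻¹ * ((8*s n + 2*c0)*Δ n) :=
          mul_le_mul_of_nonneg_left hstep (by positivity)
  have hPlim : Tendsto (fun n => ((c0/2)^2)⁻¹ * ((8*s n + 2*c0)*Δ n)) atTop (𝓝 0) := by
    have l1 : Tendsto (fun n => 8*s n + 2*c0) atTop (𝓝 (2*c0)) := by
      have := (hsT.const_mul (8:ℝ)).add
        (tendsto_const_nhds : Tendsto (fun _ : ℕ => 2*c0) atTop (𝓝 (2*c0)))
      simpa using this
    have l2 : Tendsto (fun n => (8*s n + 2*c0)*Δ n) atTop (𝓝 0) := by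
      simpa using l1.mul hΔ0
    simpa using l2.const_mul ((c0/2)^2)⁻¹
  have hP : Tendsto (fun n => empA x n (ζ2 n) - empA x n (ζ1 n)) atTop (𝓝 0) :=
    squeeze_zero'
      (Eventually.of_forall fun n => sub_nonneg.2 (empA_mono x n min_le_max))
      hPbnd hPlim
  have hF12 : Tendsto (fun n => F (ζ2 n) - F (ζ1 n)) atTop (𝓝 0) := by
    have h := ((U1 ζ1 hζ1I).sub (U1 ζ2 hζ2I)).add hP
    have heq : (fun n => (empA x n (ζ1 n) - F (ζ1 n)) - (empA x n (ζ2 n) - F (ζ2 n))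
        + (empA x n (ζ2 n) - empA x n (ζ1 n))) = fun n => F (ζ2 n) - F (ζ1 n) := by
      funext n; ring
    rw [heq] at h
    simpa using h
  have hminT : Tendsto (fun n => min |ζs n - ζ₀| η₀) atTop (𝓝 0) := by
    have bnd : ∀ n, min |ζs n - ζ₀| η₀ ≤ κ⁻¹ * (F (ζ2 n) - F (ζ1 n)) := by
      intro n
      have hk := hFkey (ζs n) (hζsI n)
      calc min |ζs n - ζ₀| η₀ = κ⁻¹ * (κ * min |ζs n - ζ₀| η₀) :=
          (inv_mul_cancel_left₀ (ne_of_gt hκ) _).symm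
        _ ≤ κ⁻¹ * (F (ζ2 n) - F (ζ1 n)) := mul_le_mul_of_nonneg_left hk (by positivity)
    have glim : Tendsto (fun n => κ⁻¹ * (F (ζ2 n) - F (ζ1 n))) atTop (𝓝 0) := by
      simpa using hF12.const_mul κ⁻¹
    exact squeeze_zero (fun n => le_min (abs_nonneg _) hη.le) bnd glim
  have hζT : Tendsto ζs atTop (𝓝 ζ₀) := by
    rw [Metric.tendsto_atTop]
    intro ε hε
    have hpos : 0 < min ε η₀ := lt_min hε hη
    obtain ⟨N, hN⟩ := (Metric.tendsto_atTop.1 hminT) (min ε η₀) hpos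
    refine ⟨N, fun n hn => ?_⟩
    have hthis := hN n hn
    rw [Real.dist_eq, sub_zero, abs_of_nonneg (le_min (abs_nonneg _) hη.le)] at hthis
    rw [Real.dist_eq]
    rcases min_cases |ζs n - ζ₀| η₀ with ⟨he, _⟩ | ⟨he, _⟩
    · rw [he] at hthis; exact lt_of_lt_of_le hthis (min_le_left _ _)
    · rw [he] at hthis
      exact absurd (lt_of_lt_of_le hthis (min_le_right _ _)) (lt_irrefl _)
  exact hαT.prodMk_nhds (hβT.prodMk_nhds hζT)

lemma cdf_diff (νZ : Measure ℝ) [IsProbabilityMeasure νZ] {t s : ℝ} (hts : t ≤ s) :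
    (νZ (Iic s)).toReal - (νZ (Iic t)).toReal = (νZ (Ioc t s)).toReal := by
  rw [← Iic_union_Ioc_eq_Iic hts,
    measure_union (Iic_disjoint_Ioc le_rfl) measurableSet_Ioc,
    ENNReal.toReal_add (measure_ne_top _ _) (measure_ne_top _ _)]
  ring

lemma cdf_mono (νZ : Measure ℝ) [IsProbabilityMeasure νZ] :
    Monotone (fun t => (νZ (Iic t)).toReal) := fun t s hts =>
  ENNReal.toReal_le_toReal (measure_ne_top _ _) (measure_ne_top _ _) |>.2
    (measure_mono (Iic_subset_Iic.2 hts))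

lemma cdf_cont (f : ℝ → ℝ) (C : ℝ) (hC : ∀ z, f z ≤ C)
    (νZ : Measure ℝ) [IsProbabilityMeasure νZ]
    (hνZ : νZ = volume.withDensity (fun z => ENNReal.ofReal (f z))) :
    Continuous (fun t => (νZ (Iic t)).toReal) := by
  set C' := max C 0 with hC'
  have hC'0 : 0 ≤ C' := le_max_right _ _
  have hbound : ∀ t s : ℝ, t ≤ s →
      (νZ (Iic s)).toReal - (νZ (Iic t)).toReal ≤ C' * (s - t) := by
    intro t s hts
    rw [cdf_diff νZ hts]
    have h1 : νZ (Ioc t s) ≤ ENNReal.ofReal (C' * (s - t)) := by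
      rw [hνZ, withDensity_apply _ measurableSet_Ioc]
      calc ∫⁻ z in Ioc t s, ENNReal.ofReal (f z) ∂volume
          ≤ ∫⁻ _ in Ioc t s, ENNReal.ofReal C' ∂volume :=
            setLIntegral_mono measurable_const
              (fun z _ => ENNReal.ofReal_le_ofReal (le_trans (hC z) (le_max_left _ _)))
        _ = ENNReal.ofReal C' * volume (Ioc t s) := setLIntegral_const _ _
        _ = ENNReal.ofReal C' * ENNReal.ofReal (s - t) := by rw [Real.volume_Ioc]
        _ = ENNReal.ofReal (C' * (s - t)) := (ENNReal.ofReal_mul hC'0).symm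
    exact ENNReal.toReal_le_of_le_ofReal (mul_nonneg hC'0 (by linarith)) h1
  have hlip : LipschitzWith (Real.toNNReal C') (fun t => (νZ (Iic t)).toReal) := by
    apply LipschitzWith.of_dist_le_mul
    intro x y
    rw [Real.dist_eq, Real.dist_eq, Real.coe_toNNReal _ hC'0]
    rcases le_total x y with h | h
    · rw [abs_of_nonpos (by linarith [cdf_mono νZ h] : (νZ (Iic x)).toReal - (νZ (Iic y)).toReal ≤ 0),
        abs_of_nonpos (by linarith : x - y ≤ 0)]
      have := hbound x y h
      linarith
    · rw [abs_of_nonneg (by linarith [cdf_mono νZ h] : 0 ≤ (νZ (Iic x)).toReal - (νZ (Iic y)).toReal),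
        abs_of_nonneg (by linarith : 0 ≤ x - y)]
      have := hbound y x h
      linarith
  exact hlip.continuous

lemma cdf_lower (f : ℝ → ℝ) (κ η₀ ζ₀ : ℝ) (hκ : 0 < κ) (hη : 0 < η₀)
    (hfl : ∀ z, |z - ζ₀| ≤ η₀ → κ < f z)
    (νZ : Measure ℝ) [IsProbabilityMeasure νZ]
    (hνZ : νZ = volume.withDensity (fun z => ENNReal.ofReal (f z))) :
    ∀ ζ : ℝ, κ * min |ζ - ζ₀| η₀ ≤
      (νZ (Iic (max ζ ζ₀))).toReal - (νZ (Iic (min ζ ζ₀))).toReal := by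
  have hseg : ∀ t s : ℝ, t ≤ s → (∀ z ∈ Ioc t s, |z - ζ₀| ≤ η₀) →
      κ * (s - t) ≤ (νZ (Iic s)).toReal - (νZ (Iic t)).toReal := by
    intro t s hts hin
    rw [cdf_diff νZ hts]
    have h1 : ENNReal.ofReal (κ * (s - t)) ≤ νZ (Ioc t s) := by
      rw [hνZ, withDensity_apply _ measurableSet_Ioc]
      calc ENNReal.ofReal (κ * (s - t))
          = ENNReal.ofReal κ * ENNReal.ofReal (s - t) := ENNReal.ofReal_mul hκ.le
        _ = ENNReal.ofReal κ * volume (Ioc t s) := by rw [Real.volume_Ioc]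
        _ = ∫⁻ _ in Ioc t s, ENNReal.ofReal κ ∂volume := (setLIntegral_const _ _).symm
        _ ≤ ∫⁻ z in Ioc t s, ENNReal.ofReal (f z) ∂volume :=
            setLIntegral_mono' measurableSet_Ioc
              (fun z hz => ENNReal.ofReal_le_ofReal (hfl z (hin z hz)).le)
    exact (ENNReal.ofReal_le_iff_le_toReal (measure_ne_top _ _)).1 h1
  intro ζ
  rcases le_total ζ₀ ζ with hc | hc
  · rw [max_eq_left hc, min_eq_right hc, abs_of_nonneg (by linarith : (0:ℝ) ≤ ζ - ζ₀)]
    set m := min (ζ - ζ₀) η₀ with hm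
    have hm0 : 0 ≤ m := le_min (by linarith) hη.le
    have hmζ : ζ₀ + m ≤ ζ := by
      have := min_le_left (ζ - ζ₀) η₀; simp only [hm]; linarith
    have h1 : κ * m ≤ (νZ (Iic (ζ₀ + m))).toReal - (νZ (Iic ζ₀)).toReal := by
      have := hseg ζ₀ (ζ₀ + m) (by linarith) (fun z hz => by
        rw [abs_of_nonneg (by linarith [hz.1] : (0:ℝ) ≤ z - ζ₀)]
        have := hz.2; have := min_le_right (ζ - ζ₀) η₀
        simp only [hm] at *; linarith)
      simpa using this
    have h2 := cdf_mono νZ hmζ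
    linarith
  · rw [max_eq_right hc, min_eq_left hc, abs_of_nonpos (by linarith : ζ - ζ₀ ≤ 0)]
    set m := min (-(ζ - ζ₀)) η₀ with hm
    have hm0 : 0 ≤ m := le_min (by linarith) hη.le
    have hmζ : ζ ≤ ζ₀ - m := by
      have := min_le_left (-(ζ - ζ₀)) η₀; simp only [hm]; linarith
    have h1 : κ * m ≤ (νZ (Iic ζ₀)).toReal - (νZ (Iic (ζ₀ - m))).toReal := by
      have := hseg (ζ₀ - m) ζ₀ (by linarith) (fun z hz => by
        rw [abs_of_nonpos (by linarith [hz.2] : z - ζ₀ ≤ 0)]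
        have := hz.1; have := min_le_right (-(ζ - ζ₀)) η₀
        simp only [hm] at *; linarith)
      simpa using this
    have h2 := cdf_mono νZ hmζ
    linarith

set_option maxHeartbeats 1000000 in
/-- Lemma 4.1(iii): almost surely, every sequence of maximizers of the empirical
criterion `M_n` over `Θ` converges to `θ₀`; in particular the least squares estimator
`θ̂_n` converges to `θ₀` almost surely. -/
theorem stmt7
    {Ω : Type} [MeasurableSpace Ω] (P : Measure Ω) [IsProbabilityMeasure P]
    -- model parameters
    (α₀ β₀ a b ζ₀ σ2 Mbd : ℝ) (f : ℝ → ℝ)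
    (νZ νε : Measure ℝ) [IsProbabilityMeasure νZ] [IsProbabilityMeasure νε]
    (ℙd : Measure (ℝ × ℝ))
    (hab : a < b) (hζ₀ : ζ₀ ∈ Icc a b) (hαβ : α₀ ≠ β₀)
    -- `Z` has a bounded density `f`, positive on `[a,b]`, bounded away from `0` near `ζ₀`
    (hνZ : νZ = volume.withDensity (fun z => ENNReal.ofReal (f z)))
    (hfbd : ∃ C, ∀ z, f z ≤ C)
    (hfpos : ∀ z ∈ Icc a b, 0 < f z)
    (hfloc : ∃ η₀ > (0 : ℝ), ∃ κ > (0 : ℝ), ∀ z, |z - ζ₀| ≤ η₀ → κ < f z)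
    (hZa : 0 < νZ (Iio a)) (hZb : 0 < νZ (Ioi b))
    -- `ε` has a continuous distribution, mean `0`, variance `σ² > 0`, finite third moment
    (hεcont : ∀ x : ℝ, νε {x} = 0)
    (hεmean : ∫ x, x ∂νε = 0)
    (hεL2 : Integrable (fun x => x ^ 2) νε)
    (hεvar : ∫ x, x ^ 2 ∂νε = σ2) (hσ : 0 < σ2)
    (hεL3 : Integrable (fun x => |x| ^ 3) νε)
    -- `ℙd` is the law of `(Y, Z)` with `Y = α₀·1{Z≤ζ₀} + β₀·1{Z>ζ₀} + ε`, `ε ⟂ Z`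
    (hℙd : ℙd = Measure.map
      (fun p : ℝ × ℝ => ((if p.1 ≤ ζ₀ then α₀ else β₀) + p.2, p.1)) (νZ.prod νε))
    -- i.i.d. data `(X_i) = (Y_i, Z_i)` with law `ℙd`
    (Xd : ℕ → Ω → ℝ × ℝ) (hXdMeas : ∀ i, Measurable (Xd i))
    (hXdLaw : ∀ i, Measure.map (Xd i) P = ℙd)
    (hXdIndep : ProbabilityTheory.iIndepFun Xd P)
    -- the least squares estimator `θ̂_n = (α̂_n, β̂_n, ζ̂_n)`, a measurable maximizer
    -- of `M_n` over `Θ = ℝ² × [a,b]`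
    (θhat : ℕ → Ω → ℝ × ℝ × ℝ) (hθhatMeas : ∀ n, Measurable (θhat n))
    (hθhatMax : ∀ n, ∀ᵐ ω ∂P, (θhat n ω).2.2 ∈ Icc a b ∧
      ∀ θ : ℝ × ℝ × ℝ, θ.2.2 ∈ Icc a b →
        (n : ℝ)⁻¹ * ∑ i ∈ Finset.range n, mfn θ (Xd i ω)
          ≤ (n : ℝ)⁻¹ * ∑ i ∈ Finset.range n, mfn (θhat n ω) (Xd i ω)) :
    -- conclusion
    (∀ᵐ ω ∂P, ∀ θs : ℕ → ℝ × ℝ × ℝ,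
      (∀ n, (θs n).2.2 ∈ Icc a b ∧
        ∀ θ : ℝ × ℝ × ℝ, θ.2.2 ∈ Icc a b →
          (n : ℝ)⁻¹ * ∑ i ∈ Finset.range n, mfn θ (Xd i ω)
            ≤ (n : ℝ)⁻¹ * ∑ i ∈ Finset.range n, mfn (θs n) (Xd i ω)) →
      Tendsto θs atTop (nhds (α₀, β₀, ζ₀))) ∧
    (∀ᵐ ω ∂P, Tendsto (fun n => θhat n ω) atTop (nhds (α₀, β₀, ζ₀))) := by
  obtain ⟨η₀, hη, κ, hκ, hfl⟩ := hfloc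
  obtain ⟨C, hC⟩ := hfbd
  set F : ℝ → ℝ := fun t => (νZ (Iic t)).toReal with hFdef
  have hFmono : Monotone F := cdf_mono νZ
  have hFcont : ContinuousOn F (Icc a b) := (cdf_cont f C hC νZ hνZ).continuousOn
  have hFkey : ∀ ζ ∈ Icc a b, κ * min |ζ - ζ₀| η₀ ≤ F (max ζ ζ₀) - F (min ζ ζ₀) :=
    fun ζ _ => cdf_lower f κ η₀ ζ₀ hκ hη hfl νZ hνZ ζ
  set qa : ℝ := (νZ (Iio a)).toReal with hqadef
  have hqa : 0 < qa := ENNReal.toReal_pos hZa.ne' (measure_ne_top _ _)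
  have hFa : qa ≤ F a :=
    (ENNReal.toReal_le_toReal (measure_ne_top _ _) (measure_ne_top _ _)).2
      (measure_mono Iio_subset_Iic_self)
  set qb : ℝ := (νZ (Ioi b)).toReal with hqbdef
  have hqb : 0 < qb := ENNReal.toReal_pos hZb.ne' (measure_ne_top _ _)
  have hFb : F b ≤ 1 - qb := by
    have hu : νZ (Iic b) + νZ (Ioi b) = 1 := by
      rw [← measure_union (Iic_disjoint_Ioi le_rfl) measurableSet_Ioi, Iic_union_Ioi,
        measure_univ]
    have := congrArg ENNReal.toReal hu
    rw [ENNReal.toReal_add (measure_ne_top _ _) (measure_ne_top _ _)] at this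
    simp only [ENNReal.toReal_one] at this
    rw [hqbdef, hFdef]
    linarith [this]
  -- the data-generating map
  set Tm : ℝ × ℝ → ℝ × ℝ := fun p => ((if p.1 ≤ ζ₀ then α₀ else β₀) + p.2, p.1) with hTm
  have hTmMeas : Measurable Tm := by
    apply Measurable.prodMk
    · exact (Measurable.ite (measurableSet_le measurable_fst measurable_const)
        measurable_const measurable_const).add measurable_snd
    · exact measurable_fst
  have hepsMeas : Measurable (epstil (α₀, β₀, ζ₀)) := by
    apply Measurable.sub measurable_fst
    exact Measurable.ite (measurableSet_le measurable_snd measurable_const)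
      measurable_const measurable_const
  have hcompT : ∀ p : ℝ × ℝ, epstil (α₀, β₀, ζ₀) (Tm p) = p.2 := by
    intro p
    by_cases h : p.1 ≤ ζ₀ <;> simp [epstil, hTm, h]
  -- integrability facts over νε
  have hid : Integrable (fun e : ℝ => e) νε := by
    have hbound : Integrable (fun x : ℝ => x^2 + 1) νε := hεL2.add (integrable_const 1)
    apply Integrable.mono' hbound aestronglyMeasurable_id
    refine ae_of_all _ fun e => ?_
    show ‖e‖ ≤ e^2 + 1
    rw [Real.norm_eq_abs]
    nlinarith [sq_nonneg (|e| - 1), sq_abs e, abs_nonneg e]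
  have hintp : Integrable (fun e : ℝ => max e 0) νε := by
    have habs : Integrable (fun e : ℝ => |e|) νε := hid.abs
    apply Integrable.mono' habs (measurable_id.max measurable_const).aestronglyMeasurable
    refine ae_of_all _ fun e => ?_
    show ‖max e 0‖ ≤ |e|
    rw [Real.norm_eq_abs]
    rcases le_total e 0 with h | h
    · rw [max_eq_right h]; simp [abs_nonneg]
    · rw [max_eq_left h]
  have hintm : Integrable (fun e : ℝ => max (-e) 0) νε := by
    have habs : Integrable (fun e : ℝ => |e|) νε := hid.abs
    apply Integrable.mono' habs (measurable_id.neg.max measurable_const).aestronglyMeasurable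
    refine ae_of_all _ fun e => ?_
    show ‖max (-e) 0‖ ≤ |e|
    rw [Real.norm_eq_abs]
    rcases le_total e 0 with h | h
    · rw [max_eq_left (by linarith)]
      rw [abs_of_nonneg (by linarith), abs_of_nonpos h]
    · rw [max_eq_right (by linarith)]; simp [abs_nonneg]
  set c : ℝ := ∫ e, max e 0 ∂νε with hcdef
  have hc : 0 ≤ c := integral_nonneg fun e => le_max_right _ _
  have hcm : ∫ e, max (-e) 0 ∂νε = c := by
    have hsubeq : (fun e : ℝ => max e 0 - max (-e) 0) = fun e => e := by
      funext e
      rcases le_total e 0 with h | h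
      · rw [max_eq_right h, max_eq_left (by linarith)]; ring
      · rw [max_eq_left h, max_eq_right (by linarith)]; ring
    have h2 : c - ∫ e, max (-e) 0 ∂νε = 0 := by
      rw [hcdef, ← integral_sub hintp hintm]
      rw [show (fun e : ℝ => max e 0 - max (-e) 0) = fun e => e from hsubeq]
      exact hεmean
    linarith
  -- indicator functions
  have hIndMeas : ∀ t : ℝ, Measurable (fun q : ℝ × ℝ => if q.2 ≤ t then (1:ℝ) else 0) :=
    fun t => Measurable.ite (measurableSet_le measurable_snd measurable_const)
      measurable_const measurable_const
  have hIndZ : ∀ t : ℝ, ∫ z, (if z ≤ t then (1:ℝ) else 0) ∂νZ = F t := by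
    intro t
    have h2 : (fun z : ℝ => if z ≤ t then (1:ℝ) else 0)
        = (Iic t).indicator (fun _ => (1:ℝ)) := by
      funext z; simp [Set.indicator, mem_Iic]
    rw [h2, integral_indicator_const _ measurableSet_Iic]
    simp [hFdef, measureReal_def]
  -- integrability over ℙd
  haveI hPdProb : IsProbabilityMeasure ℙd := by
    rw [hℙd]; exact Measure.isProbabilityMeasure_map hTmMeas.aemeasurable
  have hepsInt : Integrable (epstil (α₀, β₀, ζ₀)) ℙd := by
    rw [hℙd, integrable_map_measure hepsMeas.aestronglyMeasurable hTmMeas.aemeasurable]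
    have heq : (epstil (α₀, β₀, ζ₀)) ∘ Tm = fun p : ℝ × ℝ => p.2 := funext hcompT
    rw [heq]
    have hmap : Measure.map Prod.snd (νZ.prod νε) = νε := by
      rw [Measure.map_snd_prod, measure_univ, one_smul]
    have := (integrable_map_measure aestronglyMeasurable_id
      measurable_snd.aemeasurable).1 (by rwa [hmap])
    exact this
  have hAint : ∀ t : ℝ, Integrable (fun q : ℝ × ℝ => if q.2 ≤ t then (1:ℝ) else 0) ℙd := by
    intro t
    apply Integrable.mono' (integrable_const (1:ℝ)) (hIndMeas t).aestronglyMeasurable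
    refine ae_of_all _ fun q => ?_
    show ‖if q.2 ≤ t then (1:ℝ) else 0‖ ≤ 1
    rw [Real.norm_eq_abs]
    by_cases h : q.2 ≤ t <;> simp [h]
  have hBpint : ∀ t : ℝ, Integrable
      (fun q : ℝ × ℝ => max (epstil (α₀, β₀, ζ₀) q) 0 * (if q.2 ≤ t then (1:ℝ) else 0)) ℙd := by
    intro t
    have habs : Integrable (fun q => |epstil (α₀, β₀, ζ₀) q|) ℙd := hepsInt.abs
    apply Integrable.mono' habs
      ((hepsMeas.max measurable_const).mul (hIndMeas t)).aestronglyMeasurable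
    refine ae_of_all _ fun q => ?_
    show ‖max (epstil (α₀, β₀, ζ₀) q) 0 * (if q.2 ≤ t then (1:ℝ) else 0)‖
      ≤ |epstil (α₀, β₀, ζ₀) q|
    rw [Real.norm_eq_abs, abs_mul]
    have h1 : |max (epstil (α₀, β₀, ζ₀) q) 0| ≤ |epstil (α₀, β₀, ζ₀) q| := by
      rcases le_total (epstil (α₀, β₀, ζ₀) q) 0 with h | h
      · rw [max_eq_right h]; simp [abs_nonneg]
      · rw [max_eq_left h]
    have h2 : |if q.2 ≤ t then (1:ℝ) else 0| ≤ 1 := by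
      by_cases h : q.2 ≤ t <;> simp [h]
    calc |max (epstil (α₀, β₀, ζ₀) q) 0| * |if q.2 ≤ t then (1:ℝ) else 0|
        ≤ |epstil (α₀, β₀, ζ₀) q| * 1 :=
          mul_le_mul h1 h2 (abs_nonneg _) (abs_nonneg _)
      _ = |epstil (α₀, β₀, ζ₀) q| := mul_one _
  have hBmint : ∀ t : ℝ, Integrable
      (fun q : ℝ × ℝ => max (-(epstil (α₀, β₀, ζ₀) q)) 0 * (if q.2 ≤ t then (1:ℝ) else 0)) ℙd := by
    intro t
    have habs : Integrable (fun q => |epstil (α₀, β₀, ζ₀) q|) ℙd := hepsInt.abs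
    apply Integrable.mono' habs
      (((hepsMeas.neg).max measurable_const).mul (hIndMeas t)).aestronglyMeasurable
    refine ae_of_all _ fun q => ?_
    show ‖max (-(epstil (α₀, β₀, ζ₀) q)) 0 * (if q.2 ≤ t then (1:ℝ) else 0)‖
      ≤ |epstil (α₀, β₀, ζ₀) q|
    rw [Real.norm_eq_abs, abs_mul]
    have h1 : |max (-(epstil (α₀, β₀, ζ₀) q)) 0| ≤ |epstil (α₀, β₀, ζ₀) q| := by
      rcases le_total (epstil (α₀, β₀, ζ₀) q) 0 with h | h
      · rw [max_eq_left (by linarith), abs_of_nonneg (by linarith), abs_of_nonpos h]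
      · rw [max_eq_right (by linarith)]; simp [abs_nonneg]
    have h2 : |if q.2 ≤ t then (1:ℝ) else 0| ≤ 1 := by
      by_cases h : q.2 ≤ t <;> simp [h]
    calc |max (-(epstil (α₀, β₀, ζ₀) q)) 0| * |if q.2 ≤ t then (1:ℝ) else 0|
        ≤ |epstil (α₀, β₀, ζ₀) q| * 1 :=
          mul_le_mul h1 h2 (abs_nonneg _) (abs_nonneg _)
      _ = |epstil (α₀, β₀, ζ₀) q| := mul_one _
  -- integral values over ℙd
  have hAval : ∀ t : ℝ, ∫ q, (if q.2 ≤ t then (1:ℝ) else 0) ∂ℙd = F t := by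
    intro t
    rw [hℙd, integral_map hTmMeas.aemeasurable (hIndMeas t).aestronglyMeasurable]
    have h1 : (fun p : ℝ × ℝ => if (Tm p).2 ≤ t then (1:ℝ) else 0)
        = fun p : ℝ × ℝ => (if p.1 ≤ t then (1:ℝ) else 0) * (1:ℝ) := by
      funext p; rw [mul_one]
    rw [h1, integral_prod_mul (f := fun z : ℝ => if z ≤ t then (1:ℝ) else 0)
      (g := fun _ : ℝ => (1:ℝ))]
    simp [hIndZ t]
  have hBpval : ∀ t : ℝ, ∫ q, max (epstil (α₀, β₀, ζ₀) q) 0 * (if q.2 ≤ t then (1:ℝ) else 0) ∂ℙd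
      = c * F t := by
    intro t
    rw [hℙd, integral_map hTmMeas.aemeasurable
      (f := fun q : ℝ × ℝ => max (epstil (α₀, β₀, ζ₀) q) 0 * (if q.2 ≤ t then (1:ℝ) else 0))
      ((hepsMeas.max measurable_const).mul (hIndMeas t)).aestronglyMeasurable]
    have h1 : (fun p : ℝ × ℝ => max (epstil (α₀, β₀, ζ₀) (Tm p)) 0
        * (if (Tm p).2 ≤ t then (1:ℝ) else 0))
        = fun p : ℝ × ℝ => (if p.1 ≤ t then (1:ℝ) else 0) * max p.2 0 := by
      funext p; rw [hcompT p]; exact mul_comm _ _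
    rw [h1, integral_prod_mul (f := fun z : ℝ => if z ≤ t then (1:ℝ) else 0)
      (g := fun e : ℝ => max e 0), hIndZ t, ← hcdef]
    ring
  have hBmval : ∀ t : ℝ, ∫ q, max (-(epstil (α₀, β₀, ζ₀) q)) 0 * (if q.2 ≤ t then (1:ℝ) else 0) ∂ℙd
      = c * F t := by
    intro t
    rw [hℙd, integral_map hTmMeas.aemeasurable
      (f := fun q : ℝ × ℝ => max (-(epstil (α₀, β₀, ζ₀) q)) 0 * (if q.2 ≤ t then (1:ℝ) else 0))
      (((hepsMeas.neg).max measurable_const).mul (hIndMeas t)).aestronglyMeasurable]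
    have h1 : (fun p : ℝ × ℝ => max (-(epstil (α₀, β₀, ζ₀) (Tm p))) 0
        * (if (Tm p).2 ≤ t then (1:ℝ) else 0))
        = fun p : ℝ × ℝ => (if p.1 ≤ t then (1:ℝ) else 0) * max (-p.2) 0 := by
      funext p; rw [hcompT p]; exact mul_comm _ _
    rw [h1, integral_prod_mul (f := fun z : ℝ => if z ≤ t then (1:ℝ) else 0)
      (g := fun e : ℝ => max (-e) 0), hIndZ t, hcm]
    ring
  have hTval : ∫ q, epstil (α₀, β₀, ζ₀) q ∂ℙd = 0 := by
    rw [hℙd, integral_map hTmMeas.aemeasurable hepsMeas.aestronglyMeasurable]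
    have h1 : (fun p : ℝ × ℝ => epstil (α₀, β₀, ζ₀) (Tm p))
        = fun p : ℝ × ℝ => (1:ℝ) * p.2 := by
      funext p; rw [hcompT p, one_mul]
    rw [h1, integral_prod_mul (f := fun _ : ℝ => (1:ℝ)) (g := fun e : ℝ => e)]
    simp [hεmean]
  -- strong laws
  have convA : ∀ t : ℝ, ∀ᵐ ω ∂P,
      Tendsto (fun n => empA (fun i => Xd i ω) n t) atTop (𝓝 (F t)) := by
    intro t
    filter_upwards [slln_comp P ℙd Xd hXdMeas hXdLaw hXdIndep _ (hIndMeas t) (hAint t)]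
      with ω hω
    rw [hAval t] at hω
    exact hω
  have convBp : ∀ t : ℝ, ∀ᵐ ω ∂P,
      Tendsto (fun n => empBp α₀ β₀ ζ₀ (fun i => Xd i ω) n t) atTop (𝓝 (c * F t)) := by
    intro t
    filter_upwards [slln_comp P ℙd Xd hXdMeas hXdLaw hXdIndep
      (fun q : ℝ × ℝ => max (epstil (α₀, β₀, ζ₀) q) 0 * (if q.2 ≤ t then (1:ℝ) else 0))
      ((hepsMeas.max measurable_const).mul (hIndMeas t)) (hBpint t)] with ω hω
    rw [hBpval t] at hω
    exact hω
  have convBm : ∀ t : ℝ, ∀ᵐ ω ∂P,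
      Tendsto (fun n => empBm α₀ β₀ ζ₀ (fun i => Xd i ω) n t) atTop (𝓝 (c * F t)) := by
    intro t
    filter_upwards [slln_comp P ℙd Xd hXdMeas hXdLaw hXdIndep
      (fun q : ℝ × ℝ => max (-(epstil (α₀, β₀, ζ₀) q)) 0 * (if q.2 ≤ t then (1:ℝ) else 0))
      (((hepsMeas.neg).max measurable_const).mul (hIndMeas t)) (hBmint t)] with ω hω
    rw [hBmval t] at hω
    exact hω
  have convT : ∀ᵐ ω ∂P,
      Tendsto (fun n => empT α₀ β₀ ζ₀ (fun i => Xd i ω) n) atTop (𝓝 0) := by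
    filter_upwards [slln_comp P ℙd Xd hXdMeas hXdLaw hXdIndep _ hepsMeas hepsInt] with ω hω
    rw [hTval] at hω
    exact hω
  have main : ∀ᵐ ω ∂P, ∀ θs : ℕ → ℝ × ℝ × ℝ,
      (∀ n, (θs n).2.2 ∈ Icc a b ∧
        ∀ θ : ℝ × ℝ × ℝ, θ.2.2 ∈ Icc a b →
          (n : ℝ)⁻¹ * ∑ i ∈ Finset.range n, mfn θ (Xd i ω)
            ≤ (n : ℝ)⁻¹ * ∑ i ∈ Finset.range n, mfn (θs n) (Xd i ω)) →
      Tendsto θs atTop (nhds (α₀, β₀, ζ₀)) := by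
    filter_upwards [ae_all_iff.2 (fun q : ℚ => convA (q : ℝ)), convA a, convA b,
      ae_all_iff.2 (fun q : ℚ => convBp (q : ℝ)), convBp a, convBp b,
      ae_all_iff.2 (fun q : ℚ => convBm (q : ℝ)), convBm a, convBm b, convT]
      with ω hAq hAa hAb hBpq hBpa hBpb hBmq hBma hBmb hTw
    intro θs hθs
    refine key_det α₀ β₀ a b ζ₀ hab hζ₀ hαβ F hFmono hFcont κ η₀ hκ hη hFkey
      qa qb hqa hqb hFa hFb c hc (fun i => Xd i ω) ?_ ?_ ?_ hTw θs hθs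
    · intro t ht hadm
      rcases hadm with rfl | rfl | ⟨q, rfl⟩
      exacts [hAa, hAb, hAq q]
    · intro t ht hadm
      rcases hadm with rfl | rfl | ⟨q, rfl⟩
      exacts [hBpa, hBpb, hBpq q]
    · intro t ht hadm
      rcases hadm with rfl | rfl | ⟨q, rfl⟩
      exacts [hBma, hBmb, hBmq q]
  refine ⟨main, ?_⟩
  filter_upwards [main, ae_all_iff.2 hθhatMax] with ω h1 h2
  exact h1 _ h2
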